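/- Let k be a field, S = k[x₀,…,x_m], 𝔪 = (x₀,…,x_m), let h : ℕ → ℕ be a function, and let C < D be natural numbers. Define h̄ : ℕ → ℕ by h̄(d) = h(d) for d < D and h̄(d) = 0 for d ≥ D. Assume: (i) every homogeneous ideal I ⊆ S with HF(S/I) = h is generated in degrees ≤ C; (ii) every homogeneous ideal J ⊆ S with HF(S/J) = h̄ is generated by homogeneous polynomials each of degree at most C or of degree exactly D; (iii) every homogeneous ideal I' ⊆ S generated in degrees ≤ C with HF(S/I';d) = h(d) for all d < D satisfies HF(S/I';d) = h(d) for all d ∈ ℕ. Then the assignments θ(I) = I + 𝔪^D and ρ(J) = J_{≤C} are mutually inverse bijections between the set of homogeneous ideals I ⊆ S with HF(S/I) = h and the set of homogeneous ideals J ⊆ S with HF(S/J) = h̄. -/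

import Mathlib

open MvPolynomial

attribute [local instance] MvPolynomial.gradedAlgebra

/-- The Hilbert function of `S/I` in degree `d`: the `k`-dimension of the image of the
degree-`d` homogeneous component of `S` in the quotient `S/I`. -/
noncomputable def HF {k : Type*} [Field k] {n : ℕ} (I : Ideal (MvPolynomial (Fin n) k))
    (d : ℕ) : ℕ :=
  Module.finrank k
    ((homogeneousSubmodule (Fin n) k d).map (Ideal.Quotient.mkₐ k I).toLinearMap)

/-- The irrelevant maximal ideal `𝔪 = (x₀, …, x_m)`. -/
noncomputable def irrelevantIdeal (k : Type*) [Field k] (n : ℕ) : Ideal (MvPolynomial (Fin n) k) :=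
  Ideal.span (Set.range MvPolynomial.X)

/-- `J_{≤ B}`: the ideal generated by the homogeneous polynomials of `J` of degree at
most `B`. -/
noncomputable def truncIdeal {k : Type*} [Field k] {n : ℕ} (J : Ideal (MvPolynomial (Fin n) k))
    (B : ℕ) : Ideal (MvPolynomial (Fin n) k) :=
  Ideal.span {f | f ∈ J ∧ ∃ d ≤ B, f.IsHomogeneous d}

/-- An ideal is generated in degrees `≤ C` if it admits a generating set consisting of
homogeneous polynomials of degree at most `C`. -/
def GenInDegLE {k : Type*} [Field k] {n : ℕ} (I : Ideal (MvPolynomial (Fin n) k))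
    (C : ℕ) : Prop :=
  ∃ G : Set (MvPolynomial (Fin n) k), I = Ideal.span G ∧
    ∀ f ∈ G, ∃ d ≤ C, f.IsHomogeneous d

section Aux

variable {k : Type*} [Field k] {n : ℕ}

lemma coeff_zero_of_mem_irrel {f : MvPolynomial (Fin n) k} (hf : f ∈ irrelevantIdeal k n) :
    MvPolynomial.coeff 0 f = 0 := by
  have hle : irrelevantIdeal k n ≤ RingHom.ker (constantCoeff (σ := Fin n) (R := k)) := by
    rw [irrelevantIdeal, Ideal.span_le]
    rintro _ ⟨i, rfl⟩
    simp [RingHom.mem_ker]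
  have := hle hf
  rwa [RingHom.mem_ker, constantCoeff_eq] at this

lemma degree_add' (u v : Fin n →₀ ℕ) : (u + v).degree = u.degree + v.degree := by
  simp [Finsupp.degree_eq_weight_one, map_add]

lemma coeff_eq_zero_of_mem_irrel_pow (D : ℕ) :
    ∀ f : MvPolynomial (Fin n) k, f ∈ irrelevantIdeal k n ^ D →
      ∀ s : Fin n →₀ ℕ, s.degree < D → MvPolynomial.coeff s f = 0 := by
  induction D with
  | zero => intro f _ s hs; omega
  | succ D ih =>
    intro f hf
    rw [pow_succ] at hf
    refine Submodule.mul_induction_on hf ?_ ?_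
    · intro p hp q hq s hs
      rw [coeff_mul]
      apply Finset.sum_eq_zero
      rintro ⟨u, v⟩ huv
      rw [Finset.HasAntidiagonal.mem_antidiagonal] at huv
      by_cases hu : u.degree < D
      · rw [ih p hp u hu, zero_mul]
      · have hdeg : u.degree + v.degree = s.degree := by rw [← huv, degree_add']
        have hv : v = 0 := (Finsupp.degree_eq_zero_iff v).mp (by omega)
        subst hv
        rw [coeff_zero_of_mem_irrel hq, mul_zero]
    · intro x y hx hy s hs
      rw [MvPolynomial.coeff_add, hx s hs, hy s hs, add_zero]

lemma homogeneousComponent_eq_zero_of_mem_irrel_pow {D d : ℕ} (hd : d < D)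
    {f : MvPolynomial (Fin n) k} (hf : f ∈ irrelevantIdeal k n ^ D) :
    homogeneousComponent d f = 0 := by
  ext s
  rw [coeff_homogeneousComponent, MvPolynomial.coeff_zero]
  split_ifs with hsd
  · exact coeff_eq_zero_of_mem_irrel_pow D f hf s (by omega)
  · rfl

lemma X_mem_irrel (i : Fin n) : (X i : MvPolynomial (Fin n) k) ∈ irrelevantIdeal k n :=
  Ideal.subset_span ⟨i, rfl⟩

lemma monomial_mem_irrel_pow (s : Fin n →₀ ℕ) (a : k) :
    monomial s a ∈ irrelevantIdeal k n ^ s.degree := by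
  induction s using Finsupp.induction with
  | zero =>
    rw [map_zero, pow_zero, Ideal.one_eq_top]
    exact Submodule.mem_top
  | single_add i e s hi he ih =>
    have h1 : (Finsupp.single i e : Fin n →₀ ℕ).degree = e := by
      simp [Finsupp.degree_apply, Finsupp.support_single_ne_zero _ he]
    rw [monomial_single_add, degree_add', h1, pow_add]
    exact Ideal.mul_mem_mul (Ideal.pow_mem_pow (X_mem_irrel i) e) ih

lemma mem_irrel_pow_of_isHomogeneous {D d : ℕ} (hDd : D ≤ d) {f : MvPolynomial (Fin n) k}
    (hf : f.IsHomogeneous d) : f ∈ irrelevantIdeal k n ^ D := by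
  rw [f.as_sum]
  apply Ideal.sum_mem
  intro s hs
  have hdeg : s.degree = d := by
    by_contra hne
    exact MvPolynomial.mem_support_iff.mp hs (hf.coeff_eq_zero hne)
  exact Ideal.pow_le_pow_right (hdeg ▸ hDd) (monomial_mem_irrel_pow s _)

lemma irrel_pow_isHomogeneous (D : ℕ) :
    (irrelevantIdeal k n ^ D).IsHomogeneous (homogeneousSubmodule (Fin n) k) := by
  induction D with
  | zero =>
    rw [pow_zero, Ideal.one_eq_top]
    exact Ideal.IsHomogeneous.top _
  | succ D ih =>
    rw [pow_succ]
    refine ih.mul ?_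
    refine Ideal.homogeneous_span _ _ ?_
    rintro _ ⟨i, rfl⟩
    exact ⟨1, (mem_homogeneousSubmodule _ _).mpr (isHomogeneous_X k i)⟩

lemma homogeneousComponent_mem_of_mem {I : Ideal (MvPolynomial (Fin n) k)}
    (hI : I.IsHomogeneous (homogeneousSubmodule (Fin n) k))
    {f : MvPolynomial (Fin n) k} (hf : f ∈ I) (i : ℕ) : homogeneousComponent i f ∈ I := by
  have h := hI i hf
  have heq : ((DirectSum.decompose (homogeneousSubmodule (Fin n) k) f i :
      MvPolynomial (Fin n) k)) = homogeneousComponent i f :=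
    MvPolynomial.decomposition.decompose'_apply f i
  rwa [heq] at h

noncomputable def hfMap (I : Ideal (MvPolynomial (Fin n) k)) (d : ℕ) :
    homogeneousSubmodule (Fin n) k d →ₗ[k] (MvPolynomial (Fin n) k) ⧸ I :=
  (Ideal.Quotient.mkₐ k I).toLinearMap ∘ₗ (homogeneousSubmodule (Fin n) k d).subtype

lemma HF_eq_range (I : Ideal (MvPolynomial (Fin n) k)) (d : ℕ) :
    HF I d = Module.finrank k (LinearMap.range (hfMap I d)) := by
  rw [HF, hfMap, LinearMap.range_comp, Submodule.range_subtype]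

lemma HF_congr {I J : Ideal (MvPolynomial (Fin n) k)} (d : ℕ)
    (hIJ : ∀ f : MvPolynomial (Fin n) k, f.IsHomogeneous d → (f ∈ I ↔ f ∈ J)) :
    HF I d = HF J d := by
  have hker : LinearMap.ker (hfMap I d) = LinearMap.ker (hfMap J d) := by
    ext x
    simp only [LinearMap.mem_ker, hfMap, LinearMap.comp_apply, Submodule.subtype_apply,
      AlgHom.toLinearMap_apply, Ideal.Quotient.mkₐ_eq_mk, Ideal.Quotient.eq_zero_iff_mem]
    exact hIJ x ((mem_homogeneousSubmodule _ _).mp x.2)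
  rw [HF_eq_range, HF_eq_range,
    ← LinearEquiv.finrank_eq (LinearMap.quotKerEquivRange (hfMap I d)),
    ← LinearEquiv.finrank_eq (LinearMap.quotKerEquivRange (hfMap J d)), hker]

instance homogeneousSubmodule_finiteDimensional (d : ℕ) :
    FiniteDimensional k (homogeneousSubmodule (Fin n) k d) := by
  apply Submodule.finiteDimensional_of_le (S₂ := restrictTotalDegree (Fin n) k d)
  intro f hf
  rw [mem_restrictTotalDegree]
  exact ((mem_homogeneousSubmodule _ _).mp hf).totalDegree_le

lemma HF_eq_zero_of {I : Ideal (MvPolynomial (Fin n) k)} {d : ℕ}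
    (hsub : ∀ f : MvPolynomial (Fin n) k, f.IsHomogeneous d → f ∈ I) : HF I d = 0 := by
  have hbot : (homogeneousSubmodule (Fin n) k d).map
      (Ideal.Quotient.mkₐ k I).toLinearMap = ⊥ := by
    rw [Submodule.eq_bot_iff]
    rintro x ⟨f, hf, rfl⟩
    have hfI : f ∈ I := hsub f ((mem_homogeneousSubmodule _ _).mp hf)
    show (Ideal.Quotient.mkₐ k I).toLinearMap f = 0
    simp only [AlgHom.toLinearMap_apply, Ideal.Quotient.mkₐ_eq_mk]
    exact Ideal.Quotient.eq_zero_iff_mem.mpr hfI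
  rw [HF, hbot, finrank_bot]

set_option synthInstance.maxHeartbeats 1000000 in
lemma mem_of_HF_eq_zero {I : Ideal (MvPolynomial (Fin n) k)} {d : ℕ}
    (hHF : HF I d = 0) {f : MvPolynomial (Fin n) k} (hf : f.IsHomogeneous d) : f ∈ I := by
  have hbot : (homogeneousSubmodule (Fin n) k d).map
      (Ideal.Quotient.mkₐ k I).toLinearMap = ⊥ := Submodule.finrank_eq_zero.mp hHF
  have hmem : Ideal.Quotient.mkₐ k I f ∈ (homogeneousSubmodule (Fin n) k d).map
      (Ideal.Quotient.mkₐ k I).toLinearMap :=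
    ⟨f, (mem_homogeneousSubmodule _ _).mpr hf, rfl⟩
  rw [hbot, Submodule.mem_bot] at hmem
  rwa [Ideal.Quotient.mkₐ_eq_mk, Ideal.Quotient.eq_zero_iff_mem] at hmem

lemma mem_of_mem_sup_irrel {I : Ideal (MvPolynomial (Fin n) k)}
    (hI : I.IsHomogeneous (homogeneousSubmodule (Fin n) k)) {D d : ℕ} (hd : d < D)
    {f : MvPolynomial (Fin n) k} (hf : f.IsHomogeneous d)
    (hmem : f ∈ I ⊔ irrelevantIdeal k n ^ D) : f ∈ I := by
  obtain ⟨a, ha, b, hb, hab⟩ := Submodule.mem_sup.mp hmem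
  have h1 : homogeneousComponent d f = f := by
    have := homogeneousComponent_of_mem (m := d) (n := d)
      ((mem_homogeneousSubmodule _ _).mpr hf)
    simpa using this
  have h2 : f = homogeneousComponent d a + homogeneousComponent d b := by
    rw [← h1, ← hab, map_add]
  rw [h2, homogeneousComponent_eq_zero_of_mem_irrel_pow hd hb, add_zero]
  exact _root_.homogeneousComponent_mem_of_mem hI ha d

end Aux

theorem theta_rho_mutually_inverse_bijections
    {k : Type*} [Field k] (m : ℕ) (h : ℕ → ℕ) (C D : ℕ) (hCD : C < D)
    (hbar : ℕ → ℕ) (hbar_def : ∀ d, hbar d = if d < D then h d else 0)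
    -- the set of homogeneous ideals with Hilbert function h
    (A : Set (Ideal (MvPolynomial (Fin (m+1)) k)))
    (hA : A = {I | Ideal.IsHomogeneous (homogeneousSubmodule (Fin (m+1)) k) I ∧ HF I = h})
    -- the set of homogeneous ideals with Hilbert function h̄
    (B : Set (Ideal (MvPolynomial (Fin (m+1)) k)))
    (hB : B = {J | Ideal.IsHomogeneous (homogeneousSubmodule (Fin (m+1)) k) J ∧ HF J = hbar})
    -- (i) every homogeneous ideal with Hilbert function h is generated in degrees ≤ C
    (hyp1 : ∀ I ∈ A, GenInDegLE I C)
    -- (ii) every homogeneous ideal with Hilbert function h̄ is generated by homogeneous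
    -- polynomials each of degree at most C or of degree exactly D
    (hyp2 : ∀ J ∈ B, ∃ G : Set (MvPolynomial (Fin (m+1)) k), J = Ideal.span G ∧
      ∀ f ∈ G, (∃ d ≤ C, f.IsHomogeneous d) ∨ f.IsHomogeneous D)
    -- (iii) every homogeneous ideal generated in degrees ≤ C whose Hilbert function agrees
    -- with h below D has Hilbert function h everywhere
    (hyp3 : ∀ I' : Ideal (MvPolynomial (Fin (m+1)) k),
      Ideal.IsHomogeneous (homogeneousSubmodule (Fin (m+1)) k) I' → GenInDegLE I' C →
      (∀ d < D, HF I' d = h d) → ∀ d, HF I' d = h d) :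
    (∀ I ∈ A, I + irrelevantIdeal k (m+1) ^ D ∈ B) ∧
    (∀ J ∈ B, truncIdeal J C ∈ A) ∧
    (∀ I ∈ A, truncIdeal (I + irrelevantIdeal k (m+1) ^ D) C = I) ∧
    (∀ J ∈ B, truncIdeal J C + irrelevantIdeal k (m+1) ^ D = J) := by
  subst hA hB
  have htrunc_le : ∀ (J : Ideal (MvPolynomial (Fin (m+1)) k)), truncIdeal J C ≤ J := by
    intro J
    rw [truncIdeal]
    exact Ideal.span_le.mpr fun f hf => hf.1
  have htrunc_homog : ∀ (J : Ideal (MvPolynomial (Fin (m+1)) k)),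
      (truncIdeal J C).IsHomogeneous (homogeneousSubmodule (Fin (m+1)) k) := by
    intro J
    refine Ideal.homogeneous_span _ _ ?_
    rintro f ⟨-, d, -, hhom⟩
    exact ⟨d, (mem_homogeneousSubmodule _ _).mpr hhom⟩
  -- key sup-decomposition for ideals in B
  have hkey : ∀ J ∈ {J | Ideal.IsHomogeneous (homogeneousSubmodule (Fin (m+1)) k) J ∧
      HF J = hbar}, J ≤ truncIdeal J C ⊔ irrelevantIdeal k (m+1) ^ D := by
    intro J hJ
    obtain ⟨G, hJG, hGprop⟩ := hyp2 J hJ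
    have hspan : Ideal.span G ≤ truncIdeal J C ⊔ irrelevantIdeal k (m+1) ^ D := by
      apply Ideal.span_le.mpr
      intro g hg
      rcases hGprop g hg with ⟨d, hdC, hhom⟩ | hhom
      · have hgJ : g ∈ J := by rw [hJG]; exact Ideal.subset_span hg
        exact Submodule.mem_sup_left (Ideal.subset_span ⟨hgJ, d, hdC, hhom⟩)
      · exact Submodule.mem_sup_right (mem_irrel_pow_of_isHomogeneous le_rfl hhom)
    exact le_trans (le_of_eq hJG) hspan
  refine ⟨?_, ?_, ?_, ?_⟩
  · -- θ maps A to B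
    rintro I ⟨hIh, hIHF⟩
    rw [Submodule.add_eq_sup]
    refine ⟨hIh.sup (irrel_pow_isHomogeneous D), funext fun d => ?_⟩
    rw [hbar_def d]
    split_ifs with hdD
    · rw [← congrFun hIHF d]
      refine HF_congr d fun f hf => ⟨fun hmem => mem_of_mem_sup_irrel hIh hdD hf hmem,
        fun hmem => Submodule.mem_sup_left hmem⟩
    · exact HF_eq_zero_of fun f hf =>
        Submodule.mem_sup_right (mem_irrel_pow_of_isHomogeneous (by omega) hf)
  · -- ρ maps B to A
    rintro J hJ
    have hJle := hkey J hJ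
    obtain ⟨hJh, hJHF⟩ := hJ
    have hgen : GenInDegLE (truncIdeal J C) C :=
      ⟨{f | f ∈ J ∧ ∃ d ≤ C, f.IsHomogeneous d}, rfl, fun f hf => hf.2⟩
    have hagree : ∀ d < D, HF (truncIdeal J C) d = h d := by
      intro d hdD
      have heq : HF (truncIdeal J C) d = HF J d := by
        refine HF_congr d fun f hf => ⟨fun hm => htrunc_le J hm,
          fun hm => mem_of_mem_sup_irrel (htrunc_homog J) hdD hf (hJle hm)⟩
      rw [heq, hJHF, hbar_def d, if_pos hdD]
    exact ⟨htrunc_homog J, funext (hyp3 _ (htrunc_homog J) hgen hagree)⟩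
  · -- ρ ∘ θ = id
    rintro I ⟨hIh, hIHF⟩
    apply le_antisymm
    · rw [truncIdeal]
      apply Ideal.span_le.mpr
      rintro f ⟨hfmem, d, hdC, hhom⟩
      rw [Submodule.add_eq_sup] at hfmem
      exact mem_of_mem_sup_irrel hIh (lt_of_le_of_lt hdC hCD) hhom hfmem
    · obtain ⟨G, hIG, hGle⟩ := hyp1 I ⟨hIh, hIHF⟩
      conv_lhs => rw [hIG]
      apply Ideal.span_le.mpr
      intro g hg
      obtain ⟨d, hdC, hhom⟩ := hGle g hg
      have hgI : g ∈ I := by rw [hIG]; exact Ideal.subset_span hg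
      have hgmem : g ∈ I + irrelevantIdeal k (m+1) ^ D := by
        rw [Submodule.add_eq_sup]
        exact Submodule.mem_sup_left hgI
      exact Ideal.subset_span ⟨hgmem, d, hdC, hhom⟩
  · -- θ ∘ ρ = id
    rintro J hJ
    have hJle := hkey J hJ
    obtain ⟨hJh, hJHF⟩ := hJ
    rw [Submodule.add_eq_sup]
    apply le_antisymm
    · apply sup_le (htrunc_le J)
      intro g hg
      have himp : (∑ i ∈ Finset.range (g.totalDegree + 1), homogeneousComponent i g) ∈ J →
          g ∈ J := by
        rw [sum_homogeneousComponent]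
        exact id
      apply himp
      apply Ideal.sum_mem
      intro i _
      by_cases hiD : i < D
      · rw [homogeneousComponent_eq_zero_of_mem_irrel_pow hiD hg]
        exact J.zero_mem
      · refine mem_of_HF_eq_zero ?_ (homogeneousComponent_isHomogeneous i g)
        rw [hJHF, hbar_def i, if_neg hiD]
    · exact hJle
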